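/- arXiv:1312.1930 — 5 statements merged into one kernel-verified Lean document; each statement's English description precedes it below -/
import Mathlib

section
/- If z = x + iy lies in the closure of the standard fundamental domain, i.e. |z| ≥ 1 and -1/2 ≤ x ≤ 1/2, if E₂(z) ≠ 0, and if h(z) is real, then |y - 6/π| < 0.000283. -/
open Complex Real

/-- The weight 2 Eisenstein series `E₂(z) = 1 - 24 ∑_{n≥1} σ₁(n) e^{2πinz}`. -/
noncomputable def E₂ (z : ℂ) : ℂ :=
  1 - 24 * ∑' n : ℕ, (ArithmeticFunction.sigma 1 (n + 1) : ℂ) *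
    Complex.exp (2 * (Real.pi : ℂ) * Complex.I * ((n : ℂ) + 1) * z)

/-- The equivariant function `h(z) = z + (6/(πi))/E₂(z)`. -/
noncomputable def h (z : ℂ) : ℂ := z + (6 / ((Real.pi : ℂ) * Complex.I)) / E₂ z

lemma him (z : ℂ) : (h z).im = z.im - 6 / Real.pi * ((E₂ z)⁻¹).re := by
  have hπ : (Real.pi : ℂ) ≠ 0 := by exact_mod_cast Real.pi_ne_zero
  have h1 : (6 : ℂ) / ((Real.pi : ℂ) * Complex.I) / E₂ z
      = -(((6 / Real.pi : ℝ) : ℂ)) * (Complex.I * (E₂ z)⁻¹) := by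
    push_cast
    field_simp
    rcases eq_or_ne (E₂ z) 0 with hz | hz
    · simp [hz]
    · rw [Complex.I_sq]; ring
  rw [h, h1]
  simp [Complex.mul_im]
  ring

lemma sq_le_pow16 (n : ℕ) : (n + 1) ^ 2 ≤ 16 ^ n := by
  induction n with
  | zero => norm_num
  | succ k ih =>
    calc (k + 1 + 1) ^ 2 ≤ (2 * (k + 1)) ^ 2 := Nat.pow_le_pow_left (by omega) 2
      _ = 4 * (k + 1) ^ 2 := by ring
      _ ≤ 4 * 16 ^ k := Nat.mul_le_mul_left 4 ih
      _ ≤ 16 ^ (k + 1) := by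
          rw [pow_succ]
          calc 4 * 16 ^ k ≤ 16 * 16 ^ k := Nat.mul_le_mul_right _ (by norm_num)
            _ = 16 ^ k * 16 := Nat.mul_comm _ _

lemma sigma_le (n : ℕ) : ArithmeticFunction.sigma 1 (n + 1) ≤ 16 ^ n := by
  refine le_trans ?_ (sq_le_pow16 n)
  rw [ArithmeticFunction.sigma_one_apply]
  calc ∑ d ∈ (n+1).divisors, d ≤ ∑ _d ∈ (n+1).divisors, (n+1) :=
        Finset.sum_le_sum fun d hd => Nat.divisor_le hd
    _ = (n+1).divisors.card * (n+1) := by rw [Finset.sum_const, smul_eq_mul]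
    _ ≤ (n+1) * (n+1) := by
        refine Nat.mul_le_mul_right _ ?_
        have hsub : (n+1).divisors ⊆ Finset.range (n+1+1) := by
          intro d hd
          simp only [Finset.mem_range]
          exact Nat.lt_succ_of_le (Nat.divisor_le hd)
        have h0 : 0 ∉ (n+1).divisors := by simp
        have hsub' : (n+1).divisors ⊆ (Finset.range (n+1+1)).erase 0 :=
          fun d hd => Finset.mem_erase.mpr ⟨fun hq => h0 (hq ▸ hd), hsub hd⟩
        calc (n+1).divisors.card ≤ ((Finset.range (n+1+1)).erase 0).card :=
              Finset.card_le_card hsub'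
          _ ≤ n + 1 := by
              rw [Finset.card_erase_of_mem (by simp), Finset.card_range]
              omega
    _ = (n+1)^2 := (sq _).symm

lemma E2_sub_one_bound (z : ℂ) (ρ : ℝ)
    (hρ : Real.exp (-(2 * Real.pi * z.im)) ≤ ρ) (h16 : 16 * ρ < 1) :
    ‖E₂ z - 1‖ ≤ 24 * ρ / (1 - 16 * ρ) := by
  have hρ0 : 0 ≤ ρ := le_trans (Real.exp_pos _).le hρ
  set f : ℕ → ℂ := fun n => (ArithmeticFunction.sigma 1 (n + 1) : ℂ) *
    Complex.exp (2 * (Real.pi : ℂ) * Complex.I * ((n : ℂ) + 1) * z) with hf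
  have hterm : ∀ n : ℕ, ‖f n‖ ≤ ρ * (16 * ρ) ^ n := by
    intro n
    have harg : (2 * (Real.pi : ℂ) * Complex.I * ((n : ℂ) + 1) * z).re
        = ((n + 1 : ℕ) : ℝ) * (-(2 * Real.pi * z.im)) := by
      have he : 2 * (Real.pi : ℂ) * Complex.I * ((n : ℂ) + 1) * z
          = (((2 * Real.pi * ((n : ℝ) + 1)) : ℝ) : ℂ) * (Complex.I * z) := by
        push_cast; ring
      rw [he]
      simp [Complex.mul_re]
      ring
    have hnorm : ‖f n‖ = (ArithmeticFunction.sigma 1 (n + 1) : ℝ) *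
        (Real.exp (-(2 * Real.pi * z.im))) ^ (n + 1) := by
      rw [hf]
      simp only [norm_mul, Complex.norm_natCast, Complex.norm_exp, harg]
      rw [Real.exp_nat_mul]
    rw [hnorm]
    have h1 : (ArithmeticFunction.sigma 1 (n + 1) : ℝ) ≤ 16 ^ n := by
      exact_mod_cast Nat.cast_le.mpr (sigma_le n)
    have h2 : (Real.exp (-(2 * Real.pi * z.im))) ^ (n + 1) ≤ ρ ^ (n + 1) :=
      pow_le_pow_left₀ (Real.exp_pos _).le hρ _
    calc (ArithmeticFunction.sigma 1 (n + 1) : ℝ) *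
          (Real.exp (-(2 * Real.pi * z.im))) ^ (n + 1)
        ≤ (16 : ℝ) ^ n * ρ ^ (n + 1) := by
          apply mul_le_mul h1 h2 (by positivity) (by positivity)
      _ = ρ * (16 * ρ) ^ n := by rw [pow_succ, mul_pow]; ring
  have h16' : 0 ≤ 16 * ρ := by positivity
  have hgeo : Summable (fun n : ℕ => ρ * (16 * ρ) ^ n) :=
    (summable_geometric_of_lt_one h16' h16).mul_left ρ
  have hsn : Summable fun n => ‖f n‖ :=
    Summable.of_nonneg_of_le (fun n => norm_nonneg _) hterm hgeo
  have hT : ‖∑' n, f n‖ ≤ ρ * (1 - 16 * ρ)⁻¹ := by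
    calc ‖∑' n, f n‖ ≤ ∑' n, ‖f n‖ := norm_tsum_le_tsum_norm hsn
      _ ≤ ∑' n : ℕ, ρ * (16 * ρ) ^ n := Summable.tsum_le_tsum hterm hsn hgeo
      _ = ρ * (1 - 16 * ρ)⁻¹ := by
          rw [tsum_mul_left, tsum_geometric_of_lt_one h16' h16]
  have hE : E₂ z - 1 = -(24 * ∑' n, f n) := by rw [E₂]; ring
  calc ‖E₂ z - 1‖ = 24 * ‖∑' n, f n‖ := by
        rw [hE, norm_neg, norm_mul]
        norm_num
    _ ≤ 24 * (ρ * (1 - 16 * ρ)⁻¹) := by linarith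
    _ = 24 * ρ / (1 - 16 * ρ) := by ring

lemma key (z : ℂ) (hE : E₂ z ≠ 0) (hreal : (h z).im = 0)
    (ρ B : ℝ) (hρ : Real.exp (-(2 * Real.pi * z.im)) ≤ ρ) (h16 : 16 * ρ < 1)
    (hD : 24 * ρ / (1 - 16 * ρ) < 1)
    (hB : 6 / 3.141592 * (24 * ρ / (1 - 16 * ρ) / (1 - 24 * ρ / (1 - 16 * ρ))) ≤ B) :
    |z.im - 6 / Real.pi| ≤ B := by
  set D := 24 * ρ / (1 - 16 * ρ) with hDdef
  have hρ0 : 0 ≤ ρ := le_trans (Real.exp_pos _).le hρ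
  have h16' : 0 < 1 - 16 * ρ := by linarith
  have hD0 : 0 ≤ D := by positivity
  have hEb : ‖E₂ z - 1‖ ≤ D := E2_sub_one_bound z ρ hρ h16
  have hElow : 1 - D ≤ ‖E₂ z‖ := by
    have h1 : ‖(1 : ℂ)‖ - ‖E₂ z‖ ≤ ‖(1 : ℂ) - E₂ z‖ := norm_sub_norm_le _ _
    have h2 : ‖(1 : ℂ) - E₂ z‖ = ‖E₂ z - 1‖ := norm_sub_rev _ _
    have : ‖(1 : ℂ)‖ = 1 := by norm_num
    linarith [h1, h2 ▸ h1]
  have hpos : 0 < 1 - D := by linarith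
  have hw : ‖(E₂ z)⁻¹ - 1‖ ≤ D / (1 - D) := by
    have heq : (E₂ z)⁻¹ - 1 = (1 - E₂ z) / E₂ z := by
      field_simp
    rw [heq, norm_div]
    have h1E : ‖1 - E₂ z‖ = ‖E₂ z - 1‖ := by
      rw [norm_sub_rev]
    rw [h1E]
    exact div_le_div₀ hD0 hEb hpos hElow
  have hy : z.im = 6 / Real.pi * ((E₂ z)⁻¹).re := by
    have := him z
    rw [hreal] at this
    linarith
  have hre : |((E₂ z)⁻¹).re - 1| ≤ D / (1 - D) := by
    have h1 : ((E₂ z)⁻¹ - 1).re = ((E₂ z)⁻¹).re - 1 := by simp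
    calc |((E₂ z)⁻¹).re - 1| = |((E₂ z)⁻¹ - 1).re| := by rw [h1]
      _ ≤ ‖(E₂ z)⁻¹ - 1‖ := Complex.abs_re_le_norm _
      _ ≤ D / (1 - D) := hw
  have hπpos : 0 < Real.pi := Real.pi_pos
  have heq2 : z.im - 6 / Real.pi = 6 / Real.pi * (((E₂ z)⁻¹).re - 1) := by
    rw [hy]; ring
  rw [heq2, abs_mul, abs_of_pos (by positivity : (0:ℝ) < 6 / Real.pi)]
  have hππ : (3.141592 : ℝ) ≤ Real.pi := Real.pi_gt_d6.le
  calc 6 / Real.pi * |((E₂ z)⁻¹).re - 1|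
      ≤ 6 / 3.141592 * (D / (1 - D)) := by
        apply mul_le_mul _ hre (abs_nonneg _) (by norm_num)
        gcongr
    _ ≤ B := hB

lemma exp_nat_lb (n : ℕ) : (2.7182818283 : ℝ) ^ n ≤ Real.exp n := by
  calc (2.7182818283 : ℝ) ^ n ≤ (Real.exp 1) ^ n :=
        pow_le_pow_left₀ (by norm_num) Real.exp_one_gt_d9.le n
    _ = Real.exp n := by rw [← Real.exp_nat_mul, mul_one]

lemma exp_neg_le (y : ℝ) (n : ℕ) (ρ : ℝ) (h : (n : ℝ) ≤ 2 * Real.pi * y)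
    (hρ : 1 ≤ (2.7182818283 : ℝ) ^ n * ρ) :
    Real.exp (-(2 * Real.pi * y)) ≤ ρ := by
  have he : (0:ℝ) < (2.7182818283 : ℝ) ^ n := by positivity
  have hρ0 : 0 < ρ := by nlinarith
  calc Real.exp (-(2 * Real.pi * y)) ≤ Real.exp (-(n : ℝ)) :=
        Real.exp_le_exp.mpr (by linarith)
    _ = (Real.exp n)⁻¹ := Real.exp_neg _
    _ ≤ ((2.7182818283 : ℝ) ^ n)⁻¹ := by
        apply inv_anti₀ he (exp_nat_lb n)
    _ ≤ ρ := by
        rw [inv_le_iff_one_le_mul₀ he]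
        linarith [hρ]

lemma exp_bound_step (y B ρ : ℝ) (hy : |y - 6 / Real.pi| ≤ B) (hB : 0 ≤ B)
    (hd : 2 * 3.141593 * B ≤ 1 / 2)
    (hρ : 1 ≤ 162754.79 * (1 - 2 * 3.141593 * B) * ρ) :
    Real.exp (-(2 * Real.pi * y)) ≤ ρ := by
  have hπhi : Real.pi < 3.141593 := Real.pi_lt_d6
  have hπpos : 0 < Real.pi := Real.pi_pos
  have hy' : 6 / Real.pi - B ≤ y := by
    have := (abs_le.mp hy).1
    linarith
  set d : ℝ := 2 * 3.141593 * B with hddef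
  have hd0 : 0 ≤ d := by positivity
  have h12 : 2 * Real.pi * (6 / Real.pi) = 12 := by
    field_simp
    ring
  have h2 : 12 - d ≤ 2 * Real.pi * y := by
    have hstep : 2 * Real.pi * (6 / Real.pi - B) ≤ 2 * Real.pi * y := by nlinarith
    have hexp : 2 * Real.pi * (6 / Real.pi - B) = 12 - 2 * Real.pi * B := by
      rw [mul_sub, h12]
    nlinarith
  have hexp12 : (162754.79 : ℝ) ≤ Real.exp 12 := by
    calc (162754.79 : ℝ) ≤ (2.7182818283 : ℝ) ^ (12 : ℕ) := by norm_num
      _ ≤ Real.exp (12 : ℕ) := exp_nat_lb 12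
      _ = Real.exp 12 := by norm_num
  have hlb : 162754.79 * (1 - d) ≤ Real.exp (12 - d) := by
    have hexpd : 1 - d ≤ Real.exp (-d) := by
      have := Real.add_one_le_exp (-d)
      linarith
    calc 162754.79 * (1 - d) ≤ Real.exp 12 * Real.exp (-d) := by
          apply mul_le_mul hexp12 hexpd (by linarith) (Real.exp_pos _).le
      _ = Real.exp (12 - d) := by rw [← Real.exp_add]; ring_nf
  have hXpos : (0:ℝ) < 162754.79 * (1 - d) := by nlinarith
  calc Real.exp (-(2 * Real.pi * y)) ≤ Real.exp (-(12 - d)) :=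
        Real.exp_le_exp.mpr (by linarith)
    _ = (Real.exp (12 - d))⁻¹ := Real.exp_neg _
    _ ≤ (162754.79 * (1 - d))⁻¹ := inv_anti₀ hXpos hlb
    _ ≤ ρ := by
        rw [inv_le_iff_one_le_mul₀ hXpos]
        linarith [hρ]

/-- if z lies in the closure of the standard fundamental domain, E₂(z) ≠ 0,
and h(z) is real, then |Im z - 6/π| < 0.000283. -/
theorem stmt_1 (z : ℂ) (hz : 0 < z.im) (habs : 1 ≤ ‖z‖)
    (hre : |z.re| ≤ 1 / 2) (hE : E₂ z ≠ 0) (hreal : (h z).im = 0) :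
    |z.im - 6 / Real.pi| < 0.000283 := by
  have hπlo : (3.141592 : ℝ) < Real.pi := Real.pi_gt_d6
  have hπhi : Real.pi < 3.141593 := Real.pi_lt_d6
  -- step 0 : z.im ≥ 0.866
  have hsq : 1 ≤ z.re * z.re + z.im * z.im := by
    have h1 : (1:ℝ) ≤ ‖z‖ ^ 2 := by nlinarith [habs, norm_nonneg z]
    rw [Complex.sq_norm, Complex.normSq_apply] at h1
    exact h1
  have hre2 : z.re * z.re ≤ 1 / 4 := by
    have := abs_le.mp hre
    nlinarith [this.1, this.2]
  have hy0 : (0.866 : ℝ) ≤ z.im := by nlinarith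
  -- step 1
  have hρ0 : Real.exp (-(2 * Real.pi * z.im)) ≤ 0.00674 := by
    apply exp_neg_le z.im 5 _ _ (by norm_num)
    push_cast
    nlinarith
  have hB1 : |z.im - 6 / Real.pi| ≤ 0.4231 :=
    key z hE hreal 0.00674 0.4231 hρ0 (by norm_num) (by norm_num) (by norm_num)
  -- step 2
  have hρ1 : Real.exp (-(2 * Real.pi * z.im)) ≤ 0.0001235 := by
    apply exp_neg_le z.im 9 _ _ (by norm_num)
    · push_cast
      have hy1 : 6 / Real.pi - 0.4231 ≤ z.im := by
        have := (abs_le.mp hB1).1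
        linarith
      have h6 : (6 : ℝ) / 3.141593 ≤ 6 / Real.pi := by
        gcongr
      have hπpos : 0 < Real.pi := Real.pi_pos
      nlinarith
  have hB2 : |z.im - 6 / Real.pi| ≤ 0.005689 :=
    key z hE hreal 0.0001235 0.005689 hρ1 (by norm_num) (by norm_num) (by norm_num)
  -- step 3
  have hρ2 : Real.exp (-(2 * Real.pi * z.im)) ≤ 0.000006372 :=
    exp_bound_step z.im 0.005689 _ hB2 (by norm_num) (by norm_num) (by norm_num)
  have hB3 : |z.im - 6 / Real.pi| ≤ 0.00029216 :=
    key z hE hreal 0.000006372 0.00029216 hρ2 (by norm_num) (by norm_num) (by norm_num)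
  -- step 4
  have hρ3 : Real.exp (-(2 * Real.pi * z.im)) ≤ 0.0000061556 :=
    exp_bound_step z.im 0.00029216 _ hB3 (by norm_num) (by norm_num) (by norm_num)
  have hB4 : |z.im - 6 / Real.pi| ≤ 0.0002823 :=
    key z hE hreal 0.0000061556 0.0002823 hρ3 (by norm_num) (by norm_num) (by norm_num)
  calc |z.im - 6 / Real.pi| ≤ 0.0002823 := hB4
    _ < 0.000283 := by norm_num
end

section
/- Let z = x + iy ∈ ℍ with y ≥ √3/2 and let N ≥ 1 be an integer. Then |E₂(z) - (1 - 24 ∑_{n ≤ N} σ₁(n) e^{2πinz})| ≤ 24 e^{-2πNy} (N²/(2πy) + 2N/(2πy)² + 2/(2πy)³). -/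
open Complex Real

private lemma sigma_le_sq (n : ℕ) : (ArithmeticFunction.sigma 1 n : ℝ) ≤ (n : ℝ) ^ 2 := by
  have h1 : (ArithmeticFunction.sigma 1 n : ℕ) ≤ n * n := by
    rw [ArithmeticFunction.sigma_one_apply]
    calc ∑ d ∈ n.divisors, d ≤ ∑ _d ∈ n.divisors, n :=
          Finset.sum_le_sum fun d hd => Nat.divisor_le hd
      _ = n.divisors.card * n := by rw [Finset.sum_const, smul_eq_mul]
      _ ≤ n * n := by
          gcongr
          exact (Finset.card_filter_le (Finset.Ico 1 (n+1)) _).trans (by simp)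
  calc (ArithmeticFunction.sigma 1 n : ℝ) ≤ ((n * n : ℕ) : ℝ) := by exact_mod_cast h1
    _ = (n:ℝ)^2 := by push_cast; ring

private lemma step_lem (t : ℝ) (ht : 5.4 ≤ t) (x : ℝ) (hx : 1 ≤ x) :
    (x+1)^2 * Real.exp (-(t*(x+1))) ≤
      Real.exp (-(t*x)) * (x^2/t + 2*x/t^2 + 2/t^3)
      - Real.exp (-(t*(x+1))) * ((x+1)^2/t + 2*(x+1)/t^2 + 2/t^3) := by
  have ht0 : (0:ℝ) < t := by linarith
  have hE : 1 + t + t^2/2 + t^3/6 ≤ Real.exp t := by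
    have h4 := Real.sum_le_exp_of_nonneg ht0.le 4
    simp [Finset.sum_range_succ, Nat.factorial] at h4
    linarith
  have hq : (0:ℝ) < t^3 := by positivity
  have keymul : (x+1)^2 * t^3 ≤ Real.exp t * (x^2*t^2 + 2*x*t + 2) - ((x+1)^2*t^2 + 2*(x+1)*t + 2) := by
    have hA : (0:ℝ) < x^2*t^2 + 2*x*t + 2 := by positivity
    nlinarith [mul_le_mul_of_nonneg_right hE hA.le, mul_nonneg (sub_nonneg.mpr hx) (pow_pos ht0 3).le,
      mul_nonneg (mul_nonneg (sub_nonneg.mpr hx) (pow_pos ht0 3).le) (by linarith : (0:ℝ) ≤ t - 3),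
      sq_nonneg (x-1), pow_pos ht0 4, pow_pos ht0 5]
  have key : (x+1)^2 ≤ Real.exp t * (x^2/t + 2*x/t^2 + 2/t^3) - ((x+1)^2/t + 2*(x+1)/t^2 + 2/t^3) := by
    have e1 : x^2/t + 2*x/t^2 + 2/t^3 = (x^2*t^2 + 2*x*t + 2)/t^3 := by field_simp
    have e2 : (x+1)^2/t + 2*(x+1)/t^2 + 2/t^3 = ((x+1)^2*t^2 + 2*(x+1)*t + 2)/t^3 := by
      field_simp
    rw [e1, e2, ← mul_div_assoc, div_sub_div_same, le_div_iff₀ hq]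
    exact keymul
  have hsplit : Real.exp (-(t*x)) = Real.exp t * Real.exp (-(t*(x+1))) := by
    rw [← Real.exp_add]; ring_nf
  have hp : (0:ℝ) < Real.exp (-(t*(x+1))) := Real.exp_pos _
  have h2 := mul_le_mul_of_nonneg_right key hp.le
  rw [hsplit]
  nlinarith [h2]

private lemma tail_bound (t : ℝ) (ht : 5.4 ≤ t) (N : ℕ) (hN : 1 ≤ N) :
    ∑' k : ℕ, (((k + N : ℕ) : ℝ) + 1)^2 * Real.exp (-(t * (((k + N : ℕ) : ℝ) + 1)))
      ≤ Real.exp (-(t*N)) * ((N:ℝ)^2/t + 2*N/t^2 + 2/t^3) := by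
  have ht0 : (0:ℝ) < t := by linarith
  set G : ℕ → ℝ := fun n => Real.exp (-(t*n)) * ((n:ℝ)^2/t + 2*n/t^2 + 2/t^3) with hG
  have hGnonneg : ∀ n : ℕ, 0 ≤ G n := by
    intro n
    apply mul_nonneg (Real.exp_pos _).le
    positivity
  have hstep : ∀ k : ℕ, (((k + N : ℕ) : ℝ) + 1)^2 * Real.exp (-(t * (((k + N : ℕ) : ℝ) + 1)))
      ≤ G (k + N) - G (k + 1 + N) := by
    intro k
    have hx : (1:ℝ) ≤ ((k + N : ℕ) : ℝ) := by
      exact_mod_cast hN.trans (Nat.le_add_left N k)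
    have hcast : ((k + 1 + N : ℕ) : ℝ) = ((k + N : ℕ) : ℝ) + 1 := by push_cast; ring
    simp only [hG]
    rw [hcast]
    exact step_lem t ht _ hx
  have hr1 : ‖Real.exp (-t)‖ < 1 := by
    rw [Real.norm_eq_abs, abs_of_pos (Real.exp_pos _)]
    exact Real.exp_lt_one_iff.mpr (by linarith)
  have hf : Summable (fun n : ℕ => (n:ℝ)^2 * Real.exp (-t) ^ n) :=
    summable_pow_mul_geometric_of_norm_lt_one 2 hr1
  have hterm : Summable (fun k : ℕ =>
      (((k + N : ℕ) : ℝ) + 1)^2 * Real.exp (-(t * (((k + N : ℕ) : ℝ) + 1)))) := by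
    have h2 := (summable_nat_add_iff (N + 1)).mpr hf
    refine h2.congr fun k => ?_
    rw [← Real.exp_nat_mul]
    push_cast
    ring_nf
  apply Summable.tsum_le_of_sum_range_le hterm
  intro K
  calc ∑ k ∈ Finset.range K, (((k + N : ℕ) : ℝ) + 1)^2 * Real.exp (-(t * (((k + N : ℕ) : ℝ) + 1)))
      ≤ ∑ k ∈ Finset.range K, (G (k + N) - G (k + 1 + N)) :=
        Finset.sum_le_sum fun k _ => hstep k
    _ = G (0 + N) - G (K + N) := Finset.sum_range_sub' (fun k => G (k + N)) K
    _ ≤ G N := by simpa using hGnonneg (K + N)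

/-- tail bound for the Fourier expansion of E₂. -/
theorem stmt_2 (z : ℂ) (hy : Real.sqrt 3 / 2 ≤ z.im) (N : ℕ) (hN : 1 ≤ N) :
    ‖E₂ z - (1 - 24 * ∑ n ∈ Finset.Icc 1 N,
        (ArithmeticFunction.sigma 1 n : ℂ) *
          Complex.exp (2 * (Real.pi : ℂ) * Complex.I * (n : ℂ) * z))‖
      ≤ 24 * Real.exp (-2 * Real.pi * N * z.im) *
          ((N : ℝ) ^ 2 / (2 * Real.pi * z.im) + 2 * N / (2 * Real.pi * z.im) ^ 2 +
            2 / (2 * Real.pi * z.im) ^ 3) := by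
  set t : ℝ := 2 * Real.pi * z.im with htdef
  have h17 : (1.732:ℝ) ≤ Real.sqrt 3 := by
    rw [show (1.732:ℝ) = Real.sqrt (1.732^2) from (Real.sqrt_sq (by norm_num)).symm]
    exact Real.sqrt_le_sqrt (by norm_num)
  have hy' : (0.866:ℝ) ≤ z.im := by linarith
  have hpi := Real.pi_gt_d6
  have ht : (5.4:ℝ) ≤ t := by
    rw [htdef]
    nlinarith [mul_nonneg (sub_nonneg.mpr hpi.le) (sub_nonneg.mpr hy')]
  have ht0 : (0:ℝ) < t := by linarith
  set g : ℕ → ℂ := fun n => (ArithmeticFunction.sigma 1 (n + 1) : ℂ) *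
    Complex.exp (2 * (Real.pi : ℂ) * Complex.I * ((n : ℂ) + 1) * z) with hgdef
  have hT : E₂ z = 1 - 24 * ∑' n : ℕ, g n := rfl
  -- absolute value of g
  have hre : ∀ n : ℕ, (2 * (Real.pi:ℂ) * Complex.I * ((n:ℂ)+1) * z).re
      = -(t * ((n:ℝ)+1)) := by
    intro n
    have : (2 * (Real.pi:ℂ) * Complex.I * ((n:ℂ)+1) * z).re
        = -(2*Real.pi*((n:ℝ)+1)*z.im) := by
      simp [Complex.mul_re, Complex.mul_im]
    rw [this, htdef]; ring
  have habs : ∀ n : ℕ, ‖g n‖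
      = (ArithmeticFunction.sigma 1 (n+1) : ℝ) * Real.exp (-(t * ((n:ℝ)+1))) := by
    intro n
    rw [hgdef]
    simp only [norm_mul, Complex.norm_natCast, Complex.norm_exp, hre n]
  set M : ℕ → ℝ := fun n => ((n:ℝ)+1)^2 * Real.exp (-(t * ((n:ℝ)+1))) with hMdef
  have hbound : ∀ n : ℕ, ‖g n‖ ≤ M n := by
    intro n
    rw [habs n, hMdef]
    have hs := sigma_le_sq (n+1)
    push_cast at hs
    exact mul_le_mul_of_nonneg_right hs (Real.exp_pos _).le
  have hr1 : ‖Real.exp (-t)‖ < 1 := by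
    rw [Real.norm_eq_abs, abs_of_pos (Real.exp_pos _)]
    exact Real.exp_lt_one_iff.mpr (by linarith)
  have hf : Summable (fun n : ℕ => (n:ℝ)^2 * Real.exp (-t) ^ n) :=
    summable_pow_mul_geometric_of_norm_lt_one 2 hr1
  have hM : Summable M := by
    have h2 := (summable_nat_add_iff 1).mpr hf
    refine h2.congr fun k => ?_
    rw [← Real.exp_nat_mul, hMdef]
    push_cast
    ring_nf
  have hg : Summable g :=
    Summable.of_norm_bounded hM (fun n => hbound n)
  have hgnorm : Summable (fun n => ‖g n‖) :=
    Summable.of_nonneg_of_le (fun n => (norm_nonneg _)) hbound hM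
  -- partial sum identification
  have hS : (∑ n ∈ Finset.Icc 1 N, (ArithmeticFunction.sigma 1 n : ℂ) *
      Complex.exp (2 * (Real.pi : ℂ) * Complex.I * (n : ℂ) * z)) = ∑ i ∈ Finset.range N, g i := by
    rw [← Finset.Ico_add_one_right_eq_Icc, Finset.sum_Ico_eq_sum_range]
    simp only [Nat.add_one_sub_one]
    refine Finset.sum_congr rfl fun i _ => ?_
    rw [hgdef]
    rw [Nat.add_comm 1 i]
    push_cast
    ring_nf
  have hadd := hg.sum_add_tsum_nat_add N
  have h2 : ∑' i : ℕ, g (i + N) = (∑' n : ℕ, g n) - ∑ i ∈ Finset.range N, g i := by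
    rw [← hadd]; ring
  have hdiff : E₂ z - (1 - 24 * ∑ n ∈ Finset.Icc 1 N, (ArithmeticFunction.sigma 1 n : ℂ) *
      Complex.exp (2 * (Real.pi : ℂ) * Complex.I * (n : ℂ) * z))
      = -(24 * ∑' i : ℕ, g (i + N)) := by
    rw [hT, hS, h2]; ring
  rw [hdiff]
  have hnshift : Summable (fun i => ‖g (i + N)‖) :=
    (summable_nat_add_iff N).mpr hgnorm
  have hMshift : Summable (fun i => M (i + N)) := (summable_nat_add_iff N).mpr hM
  have step1 : ‖∑' i : ℕ, g (i + N)‖ ≤ ∑' i : ℕ, M (i + N) := by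
    calc ‖∑' i : ℕ, g (i + N)‖ ≤ ∑' i : ℕ, ‖g (i + N)‖ := by
          have := norm_tsum_le_tsum_norm (f := fun i => g (i + N)) hnshift
          simpa using this
      _ ≤ ∑' i : ℕ, M (i + N) := Summable.tsum_le_tsum (fun i => hbound (i + N)) hnshift hMshift
  have step2 : ∑' i : ℕ, M (i + N) ≤ Real.exp (-(t*N)) * ((N:ℝ)^2/t + 2*N/t^2 + 2/t^3) :=
    tail_bound t ht N hN
  have habs24 : ‖-(24 * ∑' i : ℕ, g (i + N))‖
      = 24 * ‖∑' i : ℕ, g (i + N)‖ := by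
    rw [norm_neg, norm_mul]
    norm_num
  rw [habs24]
  have hexp : Real.exp (-2 * Real.pi * (N:ℝ) * z.im) = Real.exp (-(t * (N:ℝ))) := by
    rw [htdef]; ring_nf
  rw [hexp]
  calc 24 * ‖∑' i : ℕ, g (i + N)‖
      ≤ 24 * (Real.exp (-(t*N)) * ((N:ℝ)^2/t + 2*N/t^2 + 2/t^3)) := by
        have := step1.trans step2
        linarith
    _ = 24 * Real.exp (-(t * (N:ℝ))) * ((N:ℝ)^2/t + 2*N/t^2 + 2/t^3) := by ring
end

section
/- Let z = x + iy ∈ ℍ with y ≥ √3/2. Then |E₂(z) - 1| ≤ 24 e^{-2πy} (1 + 1/(2πy) + 2/(2πy)² + 2/(2πy)³) < 0.14. -/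
open Complex Real

/-- `σ₁(m) ≤ m²`. -/
lemma sigma_le_sq' (m : ℕ) : ArithmeticFunction.sigma 1 m ≤ m * m := by
  rw [ArithmeticFunction.sigma_one_apply]
  calc ∑ d ∈ m.divisors, d ≤ m.divisors.card • m := by
        apply Finset.sum_le_card_nsmul
        intro d hd
        exact Nat.divisor_le hd
    _ ≤ m * m := by
        rw [smul_eq_mul]
        apply Nat.mul_le_mul_right
        calc m.divisors.card ≤ (Finset.Ico 1 (m+1)).card := by
              apply Finset.card_le_card
              intro d hd
              simp only [Finset.mem_Ico]
              exact ⟨Nat.pos_of_mem_divisors hd, Nat.lt_succ_of_le (Nat.divisor_le hd)⟩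
          _ = m := by simp

/-- `(n+1)² ≤ 4ⁿ`. -/
lemma sq_le_pow4' (n : ℕ) : (n+1)*(n+1) ≤ 4 ^ n := by
  induction n with
  | zero => norm_num
  | succ n ih =>
    have h : (n+2)*(n+2) ≤ 4*((n+1)*(n+1)) := by nlinarith
    calc (n+1+1)*(n+1+1) ≤ 4*((n+1)*(n+1)) := h
      _ ≤ 4 * 4^n := by omega
      _ = 4 ^ (n+1) := by ring

/-- Absolute value of each term of the `E₂` series. -/
lemma term_abs' (z : ℂ) (n : ℕ) :
    ‖(ArithmeticFunction.sigma 1 (n + 1) : ℂ) *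
      Complex.exp (2 * (Real.pi : ℂ) * Complex.I * ((n : ℂ) + 1) * z)‖
    = (ArithmeticFunction.sigma 1 (n + 1) : ℝ) *
        Real.exp (-(2 * Real.pi * z.im) * (n + 1)) := by
  rw [norm_mul, Complex.norm_exp]
  congr 1
  · simp [Complex.norm_natCast]
  · congr 1
    simp [Complex.mul_re, Complex.mul_im]
    ring

/-- A numeric lower bound for the exponential. -/
lemma exp_big' {t : ℝ} (ht : 5.4412 ≤ t) : 225 * (t - 4.4412) ≤ Real.exp t := by
  have h1 : (2.7182818283 : ℝ) < Real.exp 1 := Real.exp_one_gt_d9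
  have h5 : (148.41 : ℝ) ≤ Real.exp 5 := by
    have h : Real.exp 5 = Real.exp 1 ^ 5 := by
      rw [← Real.exp_nat_mul]; norm_num
    have h2 : (2.7182818283 : ℝ) ^ 5 ≤ Real.exp 1 ^ 5 :=
      pow_le_pow_left₀ (by norm_num) h1.le 5
    rw [h]; nlinarith
  have h04 : (1.519 : ℝ) ≤ Real.exp 0.4412 := by
    have he : Real.exp 0.4412 = Real.exp 0.1103 ^ 4 := by
      rw [← Real.exp_nat_mul]; norm_num
    have hb : (1.1103 : ℝ) ≤ Real.exp 0.1103 := by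
      have := Real.add_one_le_exp (0.1103 : ℝ); linarith
    have h2 : (1.1103 : ℝ) ^ 4 ≤ Real.exp 0.1103 ^ 4 :=
      pow_le_pow_left₀ (by norm_num) hb 4
    rw [he]; nlinarith
  have h54 : (225.43 : ℝ) ≤ Real.exp 5.4412 := by
    have h : Real.exp 5.4412 = Real.exp 5 * Real.exp 0.4412 := by
      rw [← Real.exp_add]; norm_num
    rw [h]
    nlinarith [Real.exp_pos 5, Real.exp_pos 0.4412]
  have htail := Real.add_one_le_exp (t - 5.4412)
  have hsplit : Real.exp t = Real.exp 5.4412 * Real.exp (t - 5.4412) := by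
    rw [← Real.exp_add]; ring_nf
  rw [hsplit]
  nlinarith [Real.exp_pos (t - 5.4412)]

/-- |E₂(z) - 1| ≤ 24 e^{-2πy}(1 + 1/(2πy) + 2/(2πy)² + 2/(2πy)³) < 0.14
for y ≥ √3/2. -/
theorem stmt_3 (z : ℂ) (hy : Real.sqrt 3 / 2 ≤ z.im) :
    ‖E₂ z - 1‖
      ≤ 24 * Real.exp (-2 * Real.pi * z.im) *
          (1 + 1 / (2 * Real.pi * z.im) + 2 / (2 * Real.pi * z.im) ^ 2 +
            2 / (2 * Real.pi * z.im) ^ 3) ∧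
    24 * Real.exp (-2 * Real.pi * z.im) *
        (1 + 1 / (2 * Real.pi * z.im) + 2 / (2 * Real.pi * z.im) ^ 2 +
          2 / (2 * Real.pi * z.im) ^ 3) < 0.14 := by
  have hch : (-2 : ℝ) * Real.pi * z.im = -(2 * Real.pi * z.im) := by ring
  rw [hch]
  set t : ℝ := 2 * Real.pi * z.im with htdef
  -- numeric bound on t
  have hsqrt : (1.7320508 : ℝ) ≤ Real.sqrt 3 := by
    rw [show (1.7320508:ℝ) = Real.sqrt (1.7320508^2) by rw [Real.sqrt_sq]; norm_num]
    apply Real.sqrt_le_sqrt; norm_num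
  have hpi : (3.141592 : ℝ) ≤ Real.pi := Real.pi_gt_d6.le
  have ht : (5.4412 : ℝ) ≤ t := by
    have hy' : (0.8660254 : ℝ) ≤ z.im := by linarith
    calc (5.4412 : ℝ) ≤ 2 * 3.141592 * 0.8660254 := by norm_num
      _ ≤ 2 * Real.pi * z.im := by
          apply mul_le_mul (by nlinarith) hy' (by norm_num)
          positivity
  have ht0 : (0:ℝ) < t := by linarith
  have hexpt : (225 : ℝ) * (t - 4.4412) ≤ Real.exp t := exp_big' ht
  have hexptpos := Real.exp_pos t
  have hexpt225 : (225 : ℝ) ≤ Real.exp t := by nlinarith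
  set r : ℝ := Real.exp (-t) with hrdef
  have hr0 : 0 < r := Real.exp_pos _
  have hrinv : r = (Real.exp t)⁻¹ := by rw [hrdef, Real.exp_neg]
  have hr4 : 4 * r < 1 := by
    rw [hrinv, mul_inv_lt_iff₀ hexptpos]
    linarith
  have hkey : 4 * r * (t + 1) ≤ 1 := by
    rw [hrinv, mul_comm (4 * (Real.exp t)⁻¹) (t+1), ← div_eq_mul_inv, ← mul_div_assoc,
      div_le_one hexptpos]
    nlinarith
  -- the series
  set f : ℕ → ℂ := fun n => (ArithmeticFunction.sigma 1 (n + 1) : ℂ) *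
    Complex.exp (2 * (Real.pi : ℂ) * Complex.I * ((n : ℂ) + 1) * z) with hfdef
  set g : ℕ → ℝ := fun n => r * (4 * r) ^ n with hgdef
  have hfg : ∀ n, ‖f n‖ ≤ g n := by
    intro n
    rw [hfdef]
    show ‖(ArithmeticFunction.sigma 1 (n + 1) : ℂ) *
      Complex.exp (2 * (Real.pi : ℂ) * Complex.I * ((n : ℂ) + 1) * z)‖ ≤ g n
    rw [term_abs']
    have h1 : (ArithmeticFunction.sigma 1 (n + 1) : ℝ) ≤ (4:ℝ)^n := by
      have := (sigma_le_sq' (n+1)).trans (sq_le_pow4' n)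
      exact_mod_cast this
    have h2 : Real.exp (-t * (n + 1)) = r * r ^ n := by
      rw [show (-t * (n+1) : ℝ) = -t + (n : ℕ) * (-t) by push_cast; ring,
        Real.exp_add, Real.exp_nat_mul]
    rw [← htdef, h2, hgdef]
    calc (ArithmeticFunction.sigma 1 (n + 1) : ℝ) * (r * r ^ n)
        ≤ (4:ℝ)^n * (r * r ^ n) := by
          apply mul_le_mul_of_nonneg_right h1 (by positivity)
      _ = r * (4 * r) ^ n := by rw [mul_pow]; ring
  have hgsum : Summable g := (summable_geometric_of_lt_one (by positivity) hr4).mul_left r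
  have hfnsum : Summable (fun n => ‖f n‖) :=
    Summable.of_nonneg_of_le (fun n => norm_nonneg _) hfg hgsum
  have habs : ‖E₂ z - 1‖ = 24 * ‖∑' n, f n‖ := by
    have h : E₂ z - 1 = -(24 * ∑' n, f n) := by rw [E₂, hfdef]; ring
    rw [h]
    simp only [norm_neg, norm_mul]
    norm_num
  have hbound : ‖∑' n, f n‖ ≤ r * (1 - 4*r)⁻¹ := by
    calc ‖∑' n, f n‖ ≤ ∑' n, ‖f n‖ := norm_tsum_le_tsum_norm hfnsum
      _ ≤ ∑' n, g n := Summable.tsum_le_tsum hfg hfnsum hgsum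
      _ = r * (1 - 4*r)⁻¹ := by
          rw [hgdef, tsum_mul_left, tsum_geometric_of_lt_one (by positivity) hr4]
  have hfrac : (1 - 4*r)⁻¹ ≤ 1 + 1/t := by
    rw [inv_le_iff_one_le_mul₀ (by linarith)]
    have hexpand : (1 + 1/t) * (1 - 4*r) - 1 = (1 - 4*r*(t+1))/t := by
      field_simp; ring
    have hnum : (0:ℝ) ≤ (1 - 4*r*(t+1))/t := div_nonneg (by linarith) ht0.le
    linarith
  constructor
  · rw [habs]
    have h1 : ‖∑' n, f n‖ ≤ r * (1 + 1/t) :=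
      hbound.trans (mul_le_mul_of_nonneg_left hfrac hr0.le)
    have h2 : (0:ℝ) ≤ 2/t^2 := by positivity
    have h3 : (0:ℝ) ≤ 2/t^3 := by positivity
    nlinarith [mul_nonneg hr0.le h2, mul_nonneg hr0.le h3]
  · have hrle : r ≤ 1/225 := by
      rw [hrinv, one_div]
      exact inv_anti₀ (by norm_num) hexpt225
    have hB : 1 + 1/t + 2/t^2 + 2/t^3 ≤ 1 + 1/5.4412 + 2/5.4412^2 + 2/5.4412^3 := by
      gcongr <;> norm_num
    have hBpos : (0:ℝ) ≤ 1 + 1/t + 2/t^2 + 2/t^3 := by positivity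
    calc 24 * r * (1 + 1/t + 2/t^2 + 2/t^3)
        ≤ 24 * (1/225) * (1 + 1/5.4412 + 2/5.4412^2 + 2/5.4412^3) := by
          apply mul_le_mul (by linarith) hB hBpos (by norm_num)
      _ < 0.14 := by norm_num
end

section
/- For every y > 0, E₂(iy) is real. The function y ↦ E₂(iy) is strictly increasing on (0,∞), tends to 1 as y → ∞, and tends to -∞ as y → 0⁺. Consequently there exists exactly one y₀ > 0 with E₂(iy₀) = 0. -/
open Complex Real

open Filter


noncomputable def fR (y : ℝ) : ℝ :=
  ∑' n : ℕ, (ArithmeticFunction.sigma 1 (n + 1) : ℝ) * Real.exp (-(2 * π * ((n : ℝ) + 1) * y))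

lemma sigma_le_s11 (m : ℕ) : (ArithmeticFunction.sigma 1 m : ℕ) ≤ m * m := by
  rw [ArithmeticFunction.sigma_one_apply]
  calc ∑ d ∈ m.divisors, d ≤ m.divisors.card • m := by
        apply Finset.sum_le_card_nsmul
        intro x hx
        exact Nat.le_of_dvd (Nat.pos_of_ne_zero (Nat.mem_divisors.1 hx).2) (Nat.mem_divisors.1 hx).1
    _ ≤ m * m := by
        have h : m.divisors ⊆ Finset.Icc 1 m := by
          intro x hx
          rw [Finset.mem_Icc]
          exact ⟨Nat.pos_of_mem_divisors hx, Nat.le_of_dvd (Nat.pos_of_ne_zero (Nat.mem_divisors.1 hx).2) (Nat.mem_divisors.1 hx).1⟩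
        have := Finset.card_le_card h
        simp only [Nat.card_Icc] at this
        simp only [smul_eq_mul]
        exact Nat.mul_le_mul_right m (by omega)

lemma sigma_ge (n : ℕ) : 1 ≤ (ArithmeticFunction.sigma 1 (n+1) : ℕ) := by
  rw [ArithmeticFunction.sigma_one_apply]
  calc 1 ≤ n + 1 := by omega
    _ ≤ ∑ d ∈ (n+1).divisors, d :=
      Finset.single_le_sum (f := fun d => d) (fun i _ => Nat.zero_le i)
        (Nat.mem_divisors_self _ (Nat.succ_ne_zero n))

lemma fR_summable {y : ℝ} (hy : 0 < y) :
    Summable (fun n : ℕ => (ArithmeticFunction.sigma 1 (n + 1) : ℝ) *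
      Real.exp (-(2 * π * ((n : ℝ) + 1) * y))) := by
  have hr : ‖Real.exp (-(2 * π * y))‖ < 1 := by
    rw [Real.norm_eq_abs, abs_of_pos (Real.exp_pos _)]
    rw [Real.exp_lt_one_iff]
    have := Real.pi_pos
    nlinarith
  have hg : Summable (fun n : ℕ => ((n : ℝ) + 1) ^ 2 * Real.exp (-(2 * π * y)) ^ (n + 1)) := by
    have : Summable (fun n : ℕ => ((n + 1 : ℕ) : ℝ) ^ 2 * Real.exp (-(2 * π * y)) ^ (n + 1)) :=
      (summable_nat_add_iff (f := fun n : ℕ => (n : ℝ) ^ 2 * Real.exp (-(2 * π * y)) ^ n) 1).2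
      (summable_pow_mul_geometric_of_norm_lt_one 2 hr)
    convert this using 2 with n
    push_cast
    ring
  apply hg.of_nonneg_of_le
  · intro n
    positivity
  · intro n
    have h1 : (ArithmeticFunction.sigma 1 (n + 1) : ℝ) ≤ ((n : ℝ) + 1) ^ 2 := by
      have := sigma_le_s11 (n + 1)
      have : ((ArithmeticFunction.sigma 1 (n + 1) : ℕ) : ℝ) ≤ (((n+1) * (n+1) : ℕ) : ℝ) :=
        Nat.cast_le.2 this
      push_cast at this ⊢
      nlinarith
    have h2 : Real.exp (-(2 * π * ((n : ℝ) + 1) * y)) = Real.exp (-(2 * π * y)) ^ (n + 1) := by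
      rw [← Real.exp_nat_mul]
      congr 1
      push_cast
      ring
    rw [h2]
    apply mul_le_mul_of_nonneg_right h1 (by positivity)

lemma E2_eq (y : ℝ) : E₂ (Complex.I * y) = ((1 - 24 * fR y : ℝ) : ℂ) := by
  have hterm : ∀ n : ℕ, (ArithmeticFunction.sigma 1 (n + 1) : ℂ) *
      Complex.exp (2 * (Real.pi : ℂ) * Complex.I * ((n : ℂ) + 1) * (Complex.I * y)) =
      (((ArithmeticFunction.sigma 1 (n + 1) : ℝ) * Real.exp (-(2 * π * ((n : ℝ) + 1) * y)) : ℝ) : ℂ) := by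
    intro n
    have harg : (2 * (Real.pi : ℂ) * Complex.I * ((n : ℂ) + 1) * (Complex.I * y)) =
        ((-(2 * π * ((n : ℝ) + 1) * y) : ℝ) : ℂ) := by
      push_cast
      linear_combination (2 * (π : ℂ) * ((n : ℂ) + 1) * (y : ℂ)) * Complex.I_mul_I
    rw [harg, ← Complex.ofReal_exp]
    push_cast
    ring
  rw [E₂, tsum_congr hterm, ← Complex.ofReal_tsum]
  rw [fR]
  push_cast
  ring

lemma E2_im (y : ℝ) : (E₂ (Complex.I * y)).im = 0 := by rw [E2_eq]; simp

lemma E2_re (y : ℝ) : (E₂ (Complex.I * y)).re = 1 - 24 * fR y := by rw [E2_eq]; simp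

lemma sigma_nonneg (n : ℕ) : (0:ℝ) ≤ (ArithmeticFunction.sigma 1 (n+1) : ℝ) := by positivity

lemma fR_nonneg (y : ℝ) : 0 ≤ fR y := tsum_nonneg (fun n => by positivity)

lemma fR_anti {a b : ℝ} (ha : 0 < a) (hab : a < b) : fR b < fR a := by
  have hpi := Real.pi_pos
  apply Summable.tsum_lt_tsum_of_nonneg (i := 0)
  · intro n; positivity
  · intro n
    apply mul_le_mul_of_nonneg_left _ (sigma_nonneg n)
    apply Real.exp_le_exp.2
    have hn : (0:ℝ) ≤ 2 * π * ((n:ℝ) + 1) := by positivity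
    have h := mul_le_mul_of_nonneg_left hab.le hn
    linarith
  · apply mul_lt_mul_of_pos_left _ (by
      have := sigma_ge 0
      have : (1:ℝ) ≤ (ArithmeticFunction.sigma 1 1 : ℝ) := by exact_mod_cast this
      linarith)
    apply Real.exp_lt_exp.2
    norm_num
    nlinarith
  · exact fR_summable ha

lemma fR_le {y : ℝ} (hy : 1 ≤ y) : fR y ≤ Real.exp (-(2 * π * (y - 1))) * fR 1 := by
  have hpi := Real.pi_pos
  simp only [fR]
  rw [← tsum_mul_left]
  apply Summable.tsum_le_tsum _ (fR_summable (by linarith)) ((fR_summable one_pos).mul_left _)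
  intro n
  have hsplit : Real.exp (-(2 * π * ((n:ℝ) + 1) * y)) =
      Real.exp (-(2 * π * ((n:ℝ) + 1) * (y - 1))) * Real.exp (-(2 * π * ((n:ℝ) + 1) * 1)) := by
    rw [← Real.exp_add]; ring_nf
  rw [hsplit]
  have h1 : Real.exp (-(2 * π * ((n:ℝ) + 1) * (y - 1))) ≤ Real.exp (-(2 * π * (y - 1))) := by
    apply Real.exp_le_exp.2
    have hn : (0:ℝ) ≤ (n:ℝ) := Nat.cast_nonneg n
    have hy' : (0:ℝ) ≤ y - 1 := by linarith
    have hc : (0:ℝ) ≤ 2 * π := by positivity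
    nlinarith [mul_nonneg (mul_nonneg hc hn) hy']
  calc (ArithmeticFunction.sigma 1 (n + 1) : ℝ) *
      (Real.exp (-(2 * π * ((n:ℝ) + 1) * (y - 1))) * Real.exp (-(2 * π * ((n:ℝ) + 1) * 1)))
      ≤ (ArithmeticFunction.sigma 1 (n + 1) : ℝ) *
        (Real.exp (-(2 * π * (y - 1))) * Real.exp (-(2 * π * ((n:ℝ) + 1) * 1))) := by
        apply mul_le_mul_of_nonneg_left _ (sigma_nonneg n)
        exact mul_le_mul_of_nonneg_right h1 (Real.exp_pos _).le
    _ = Real.exp (-(2 * π * (y - 1))) *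
        ((ArithmeticFunction.sigma 1 (n + 1) : ℝ) * Real.exp (-(2 * π * ((n:ℝ) + 1) * 1))) := by ring

lemma fR_tendsto_zero : Tendsto fR atTop (nhds 0) := by
  have hg : Tendsto (fun y : ℝ => Real.exp (-(2 * π * (y - 1))) * fR 1) atTop (nhds 0) := by
    have h1 : Tendsto (fun y : ℝ => 2 * π * (y - 1)) atTop atTop := by
      apply Tendsto.const_mul_atTop (by positivity)
      exact tendsto_atTop_add_const_right _ (-1) tendsto_id
    have h2 : Tendsto (fun y : ℝ => Real.exp (-(2 * π * (y - 1)))) atTop (nhds 0) :=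
      Real.tendsto_exp_atBot.comp (tendsto_neg_atTop_atBot.comp h1)
    simpa using h2.mul_const (fR 1)
  apply squeeze_zero' (Eventually.of_forall fR_nonneg) _ hg
  filter_upwards [eventually_ge_atTop (1:ℝ)] with y hy using fR_le hy

lemma fR_lower {y : ℝ} (hy : 0 < y) (N : ℕ) : (N:ℝ) * Real.exp (-(2 * π * N * y)) ≤ fR y := by
  have hpi := Real.pi_pos
  calc (N:ℝ) * Real.exp (-(2 * π * N * y))
      = ∑ n ∈ Finset.range N, Real.exp (-(2 * π * N * y)) := by
        rw [Finset.sum_const, Finset.card_range]; ring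
    _ ≤ ∑ n ∈ Finset.range N, (ArithmeticFunction.sigma 1 (n + 1) : ℝ) *
          Real.exp (-(2 * π * ((n:ℝ) + 1) * y)) := by
        apply Finset.sum_le_sum
        intro n hn
        have hnN : (n:ℝ) + 1 ≤ N := by
          have := Finset.mem_range.1 hn
          exact_mod_cast this
        have h1 : Real.exp (-(2 * π * (N:ℝ) * y)) ≤ Real.exp (-(2 * π * ((n:ℝ) + 1) * y)) := by
          apply Real.exp_le_exp.2
          have hc : (0:ℝ) ≤ 2 * π * y := by positivity
          have h := mul_le_mul_of_nonneg_left hnN hc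
          nlinarith
        have h2 : (1:ℝ) ≤ (ArithmeticFunction.sigma 1 (n + 1) : ℝ) := by
          exact_mod_cast sigma_ge n
        nlinarith [Real.exp_pos (-(2 * π * ((n:ℝ) + 1) * y))]
    _ ≤ fR y := Summable.sum_le_tsum _ (fun n _ => by positivity) (fR_summable hy)

lemma fR_tendsto_atTop : Tendsto fR (nhdsWithin 0 (Set.Ioi 0)) atTop := by
  rw [tendsto_atTop]
  intro M
  set N : ℕ := ⌈M⌉₊ + 1 with hN
  have hMN : M < (N:ℝ) := by
    calc M ≤ (⌈M⌉₊ : ℝ) := Nat.le_ceil M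
      _ < (N:ℝ) := by rw [hN]; push_cast; linarith
  have hcont : Tendsto (fun y : ℝ => (N:ℝ) * Real.exp (-(2 * π * N * y)))
      (nhdsWithin 0 (Set.Ioi 0)) (nhds (N:ℝ)) := by
    have hc : Continuous (fun y : ℝ => (N:ℝ) * Real.exp (-(2 * π * N * y))) := by continuity
    have h : Tendsto (fun y : ℝ => (N:ℝ) * Real.exp (-(2 * π * N * y)))
        (nhds 0) (nhds ((N:ℝ) * Real.exp (-(2 * π * N * 0)))) := hc.tendsto 0
    have h' := h.mono_left (nhdsWithin_le_nhds (s := Set.Ioi (0:ℝ)))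
    simpa using h'
  filter_upwards [hcont.eventually_const_lt hMN, self_mem_nhdsWithin] with y h1 h2
  exact le_trans h1.le (fR_lower h2 N)

lemma fR_continuousAt {y : ℝ} (hy : 0 < y) : ContinuousAt fR y := by
  have hmem : Set.Ici (y / 2) ∈ nhds y := Ici_mem_nhds (by linarith)
  apply ContinuousOn.continuousAt _ hmem
  apply continuousOn_tsum (u := fun n : ℕ => (ArithmeticFunction.sigma 1 (n + 1) : ℝ) *
      Real.exp (-(2 * π * ((n:ℝ) + 1) * (y / 2))))
  · intro i; fun_prop
  · exact fR_summable (by linarith)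
  · intro n x hx
    have hpi := Real.pi_pos
    have hnn : (0:ℝ) ≤ (ArithmeticFunction.sigma 1 (n+1) : ℝ) *
        Real.exp (-(2 * π * ((n:ℝ) + 1) * x)) := by positivity
    rw [Real.norm_of_nonneg hnn]
    apply mul_le_mul_of_nonneg_left _ (sigma_nonneg n)
    apply Real.exp_le_exp.2
    have hx' : y / 2 ≤ x := hx
    have hn : (0:ℝ) ≤ 2 * π * ((n:ℝ) + 1) := by positivity
    have h := mul_le_mul_of_nonneg_left hx' hn
    linarith

noncomputable def gE (y : ℝ) : ℝ := 1 - 24 * fR y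

lemma gE_strictMono : StrictMonoOn gE (Set.Ioi 0) := by
  intro a ha b hb hab
  have := fR_anti ha hab
  simp only [gE]
  linarith

lemma gE_tendsto_one : Tendsto gE atTop (nhds 1) := by
  have h := (fR_tendsto_zero.const_mul (24:ℝ))
  have h2 := (tendsto_const_nhds (x := (1:ℝ)) (f := (atTop : Filter ℝ))).sub h
  unfold gE
  simpa using h2

lemma gE_tendsto_atBot : Tendsto gE (nhdsWithin 0 (Set.Ioi 0)) atBot := by
  have h2 : Tendsto (fun y : ℝ => 24 * fR y) (nhdsWithin 0 (Set.Ioi 0)) atTop :=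
    fR_tendsto_atTop.const_mul_atTop (by norm_num)
  have h3 := tendsto_neg_atTop_atBot.comp h2
  have h4 := tendsto_atBot_add_const_left (nhdsWithin (0:ℝ) (Set.Ioi 0)) (1:ℝ) h3
  apply h4.congr
  intro y
  simp [gE, Function.comp]
  ring

lemma gE_continuousAt {y : ℝ} (hy : 0 < y) : ContinuousAt gE y := by
  have := fR_continuousAt hy
  have : ContinuousAt (fun y => 1 - 24 * fR y) y :=
    continuousAt_const.sub (continuousAt_const.mul this)
  exact this

/-- E₂(iy) is real, increasing, tends to 1 at ∞ and to -∞ at 0⁺, and has a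
unique zero on the imaginary axis. -/
theorem stmt_11 :
    (∀ y : ℝ, 0 < y → (E₂ (Complex.I * y)).im = 0) ∧
    StrictMonoOn (fun y : ℝ => (E₂ (Complex.I * y)).re) (Set.Ioi 0) ∧
    Filter.Tendsto (fun y : ℝ => (E₂ (Complex.I * y)).re) Filter.atTop (nhds 1) ∧
    Filter.Tendsto (fun y : ℝ => (E₂ (Complex.I * y)).re)
      (nhdsWithin 0 (Set.Ioi 0)) Filter.atBot ∧
    (∃! y₀ : ℝ, 0 < y₀ ∧ E₂ (Complex.I * y₀) = 0) := by
  have hre : ∀ y : ℝ, (E₂ (Complex.I * y)).re = gE y := fun y => E2_re y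
  refine ⟨fun y _ => E2_im y, ?_, ?_, ?_, ?_⟩
  · intro a ha b hb hab
    simp only [hre]
    exact gE_strictMono ha hb hab
  · exact gE_tendsto_one.congr (fun y => (hre y).symm)
  · exact gE_tendsto_atBot.congr (fun y => (hre y).symm)
  · -- existence and uniqueness of the zero
    obtain ⟨a, hga, ha⟩ :=
      ((gE_tendsto_atBot.eventually (eventually_le_atBot (-1))).and
        self_mem_nhdsWithin).exists
    obtain ⟨b, hgb, hab⟩ :=
      ((gE_tendsto_one.eventually_const_lt (by norm_num : (1:ℝ)/2 < 1)).and
        (eventually_gt_atTop a)).exists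
    have ha' : (0:ℝ) < a := ha
    have hcont : ContinuousOn gE (Set.Icc a b) := fun y hy =>
      (gE_continuousAt (lt_of_lt_of_le ha' hy.1)).continuousWithinAt
    have hmem : (0:ℝ) ∈ Set.Icc (gE a) (gE b) := ⟨by linarith, by linarith⟩
    obtain ⟨y₀, hy₀m, hgy₀⟩ := intermediate_value_Icc hab.le hcont hmem
    have hy₀pos : 0 < y₀ := lt_of_lt_of_le ha' hy₀m.1
    refine ⟨y₀, ⟨hy₀pos, ?_⟩, ?_⟩
    · rw [E2_eq y₀]
      have : (1 - 24 * fR y₀ : ℝ) = 0 := hgy₀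
      rw [this]
      simp
    · rintro y ⟨hy, hEy⟩
      have hgy : gE y = 0 := by
        have := E2_re y
        rw [hEy] at this
        simp at this
        simp [gE]
        linarith
      exact gE_strictMono.injOn hy hy₀pos (by rw [hgy, hgy₀])
end

section
/- For every z ∈ ℍ with Im z ≥ 0.95, the complex derivative of E₂ satisfies |E₂'(z)| ≤ 48π ∑_{n=1}^∞ σ₁(n)·n·e^{-2πn·Im z} < 0.4. -/
open Complex Real

lemma aux_sigma_le (m : ℕ) : (ArithmeticFunction.sigma 1 m : ℕ) ≤ m ^ 2 := by
  rw [ArithmeticFunction.sigma_one_apply]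
  have hcard : m.divisors.card ≤ m := by
    have : m.divisors ⊆ Finset.Ico 1 (m + 1) := by
      rw [Nat.divisors]; exact Finset.filter_subset _ _
    simpa using Finset.card_le_card this
  calc ∑ d ∈ m.divisors, d ≤ ∑ _d ∈ m.divisors, m :=
        Finset.sum_le_sum fun d hd => Nat.divisor_le hd
    _ = m.divisors.card * m := by simp [Finset.sum_const, Nat.smul_one_eq_cast]
    _ ≤ m * m := Nat.mul_le_mul_right m hcard
    _ = m ^ 2 := (sq m).symm

lemma aux_cube_le (n : ℕ) : ((n : ℝ) + 1) ^ 3 ≤ 8 ^ n := by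
  induction n with
  | zero => norm_num
  | succ k ih =>
    have hk : (0:ℝ) ≤ (k:ℝ) := Nat.cast_nonneg k
    have h2 : ((k : ℝ) + 1 + 1) ^ 3 ≤ 8 * ((k:ℝ) + 1) ^ 3 := by
      nlinarith [pow_nonneg hk 3, pow_nonneg hk 2, hk]
    have h3 : ((k:ℝ)+1)^3 ≤ (8:ℝ)^k := ih
    push_cast
    calc ((k : ℝ) + 1 + 1) ^ 3 ≤ 8 * ((k:ℝ) + 1)^3 := h2
      _ ≤ 8 * 8 ^ k := by linarith
      _ = 8 ^ (k+1) := by ring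

lemma aux_term_le (r : ℝ) (hr : 0 ≤ r) (n : ℕ) :
    (ArithmeticFunction.sigma 1 (n + 1) : ℝ) * ((n : ℝ) + 1) * r ^ (n + 1)
      ≤ r * (8 * r) ^ n := by
  have h1 : (ArithmeticFunction.sigma 1 (n + 1) : ℝ) ≤ ((n:ℝ) + 1) ^ 2 := by
    have := aux_sigma_le (n+1)
    calc (ArithmeticFunction.sigma 1 (n + 1) : ℝ) ≤ ((n+1 : ℕ) : ℝ)^2 := by
          exact_mod_cast this
      _ = ((n:ℝ)+1)^2 := by push_cast; ring
  have h2 : (ArithmeticFunction.sigma 1 (n + 1) : ℝ) * ((n : ℝ) + 1) ≤ 8 ^ n := by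
    have hpos : (0:ℝ) ≤ (n:ℝ)+1 := by positivity
    nlinarith [aux_cube_le n]
  have hrp : (0:ℝ) ≤ r ^ (n+1) := by positivity
  calc (ArithmeticFunction.sigma 1 (n + 1) : ℝ) * ((n : ℝ) + 1) * r ^ (n + 1)
      ≤ 8 ^ n * r ^ (n+1) := mul_le_mul_of_nonneg_right h2 hrp
    _ = r * (8 * r) ^ n := by rw [pow_succ, mul_pow]; ring

lemma aux_summable (r : ℝ) (hr : 0 ≤ r) (h8 : 8 * r < 1) :
    Summable (fun n : ℕ => (ArithmeticFunction.sigma 1 (n + 1) : ℝ) * ((n : ℝ) + 1) * r ^ (n + 1)) := by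
  refine Summable.of_nonneg_of_le (fun n => by positivity) (aux_term_le r hr) ?_
  exact (summable_geometric_of_lt_one (by positivity) h8).mul_left r

lemma aux_tsum_le (r : ℝ) (hr : 0 ≤ r) (h8 : 8 * r < 1) :
    (∑' n : ℕ, (ArithmeticFunction.sigma 1 (n + 1) : ℝ) * ((n : ℝ) + 1) * r ^ (n + 1))
      ≤ r / (1 - 8 * r) := by
  have hg : Summable (fun n : ℕ => r * (8 * r) ^ n) :=
    (summable_geometric_of_lt_one (by positivity) h8).mul_left r
  calc (∑' n : ℕ, (ArithmeticFunction.sigma 1 (n + 1) : ℝ) * ((n : ℝ) + 1) * r ^ (n + 1))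
      ≤ ∑' n : ℕ, r * (8 * r) ^ n :=
        Summable.tsum_le_tsum (aux_term_le r hr) (aux_summable r hr h8) hg
    _ = r * (1 - 8 * r)⁻¹ := by
        rw [tsum_mul_left, tsum_geometric_of_lt_one (by positivity) h8]
    _ = r / (1 - 8 * r) := by rw [div_eq_mul_inv]

lemma aux_exp_small : Real.exp (-(1.9 * Real.pi)) < 0.0025642 := by
  have hpi : (3.141592 : ℝ) < Real.pi := Real.pi_gt_d6
  have h1 : (5.969 : ℝ) ≤ 1.9 * Real.pi := by nlinarith
  have h2 : Real.exp (-(1.9 * Real.pi)) ≤ Real.exp (-(5.969 : ℝ)) :=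
    Real.exp_le_exp.mpr (by linarith)
  have he1 : (2.7182818 : ℝ) < Real.exp 1 := by
    have := Real.exp_one_gt_d9; linarith
  have hp : (0:ℝ) < Real.exp 1 := Real.exp_pos 1
  have hq2 : (7.389 : ℝ) < Real.exp 1 ^ 2 := by nlinarith
  have hq3 : (20.08 : ℝ) < Real.exp 1 ^ 3 := by nlinarith
  have he6 : (403.2 : ℝ) < Real.exp 6 := by
    have h6 : Real.exp 6 = Real.exp 1 ^ 6 := by
      rw [← Real.exp_nat_mul]; norm_num
    have hsq : Real.exp 1 ^ 6 = (Real.exp 1 ^ 3) ^ 2 := by ring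
    rw [h6, hsq]; nlinarith
  have hesmall : (0.969 : ℝ) ≤ Real.exp (-(0.031 : ℝ)) := by
    have := Real.add_one_le_exp (-(0.031 : ℝ)); linarith
  have h5969 : (390 : ℝ) < Real.exp 5.969 := by
    have he : Real.exp (5.969 : ℝ) = Real.exp 6 * Real.exp (-(0.031:ℝ)) := by
      rw [← Real.exp_add]; norm_num
    rw [he]; nlinarith [Real.exp_pos 6]
  have hinv : Real.exp (-(5.969:ℝ)) = (Real.exp 5.969)⁻¹ := Real.exp_neg _
  rw [hinv] at h2
  have : (Real.exp 5.969)⁻¹ < 0.0025642 := by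
    rw [inv_lt_iff_one_lt_mul₀ (Real.exp_pos _)]
    nlinarith
  linarith

/-- |E₂'(z)| ≤ 48π ∑_{n≥1} σ₁(n) n e^{-2πn Im z} < 0.4 for Im z ≥ 0.95. -/
theorem stmt_14 (z : ℂ) (hz : 0.95 ≤ z.im) :
    ‖deriv E₂ z‖
      ≤ 48 * Real.pi * ∑' n : ℕ, (ArithmeticFunction.sigma 1 (n + 1) : ℝ) * ((n : ℝ) + 1) *
          Real.exp (-2 * Real.pi * ((n : ℝ) + 1) * z.im) ∧
    48 * Real.pi * ∑' n : ℕ, (ArithmeticFunction.sigma 1 (n + 1) : ℝ) * ((n : ℝ) + 1) *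
        Real.exp (-2 * Real.pi * ((n : ℝ) + 1) * z.im) < 0.4 := by
  have hpi : (0:ℝ) < Real.pi := Real.pi_pos
  -- notation
  set g : ℕ → ℂ → ℂ := fun n w => (ArithmeticFunction.sigma 1 (n + 1) : ℂ) *
    Complex.exp (2 * (Real.pi : ℂ) * Complex.I * ((n : ℂ) + 1) * w) with hg_def
  set g' : ℕ → ℂ → ℂ := fun n w => (ArithmeticFunction.sigma 1 (n + 1) : ℂ) *
    (2 * (Real.pi : ℂ) * Complex.I * ((n : ℂ) + 1)) *
    Complex.exp (2 * (Real.pi : ℂ) * Complex.I * ((n : ℂ) + 1) * w) with hg'_def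
  -- derivative of each term
  have hder : ∀ (n : ℕ) (y : ℂ), HasDerivAt (g n) (g' n y) y := by
    intro n y
    have h1 : HasDerivAt (fun w : ℂ => 2 * (Real.pi : ℂ) * Complex.I * ((n : ℂ) + 1) * w)
        (2 * (Real.pi : ℂ) * Complex.I * ((n : ℂ) + 1)) y := by
      simpa using (hasDerivAt_id y).const_mul (2 * (Real.pi : ℂ) * Complex.I * ((n : ℂ) + 1))
    have h3 := h1.cexp.const_mul ((ArithmeticFunction.sigma 1 (n + 1) : ℂ))
    refine h3.congr_deriv ?_
    simp only [hg'_def]; ring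
  -- norm of each derivative term
  have hnorm : ∀ (n : ℕ) (y : ℂ), ‖g' n y‖
      = (ArithmeticFunction.sigma 1 (n + 1) : ℝ) * (2 * Real.pi * ((n : ℝ) + 1)) *
          Real.exp (-(2 * Real.pi * ((n : ℝ) + 1)) * y.im) := by
    intro n y
    have ha : 2 * (Real.pi : ℂ) * Complex.I * ((n : ℂ) + 1)
        = ((2 * Real.pi * ((n : ℝ) + 1) : ℝ) : ℂ) * Complex.I := by push_cast; ring
    simp only [hg'_def]
    rw [ha, norm_mul, norm_mul, Complex.norm_natCast, norm_mul, Complex.norm_real, Real.norm_eq_abs,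
      Complex.norm_I, mul_one, Complex.norm_exp,
      _root_.abs_of_nonneg (by positivity : (0:ℝ) ≤ 2 * Real.pi * ((n:ℝ)+1))]
    congr 2
    simp [Complex.mul_re]
  -- uniform bound on the half-plane im > 0.9
  set u : ℕ → ℝ := fun n => (ArithmeticFunction.sigma 1 (n + 1) : ℝ) * (2 * Real.pi * ((n : ℝ) + 1)) *
      Real.exp (-(2 * Real.pi * ((n : ℝ) + 1)) * 0.9) with hu_def
  have hexp_pow : ∀ (t : ℝ) (n : ℕ),
      Real.exp (-(2 * Real.pi * ((n : ℝ) + 1)) * t) = Real.exp (-(2 * Real.pi * t)) ^ (n + 1) := by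
    intro t n
    rw [← Real.exp_nat_mul]
    congr 1
    push_cast; ring
  have h8small : ∀ t : ℝ, 0.9 ≤ t → 8 * Real.exp (-(2 * Real.pi * t)) < 1 := by
    intro t ht
    have hpi3 : (3:ℝ) < Real.pi := Real.pi_gt_three
    have h1 : Real.exp (-(2 * Real.pi * t)) ≤ Real.exp (-(3:ℝ)) := by
      apply Real.exp_le_exp.mpr
      nlinarith
    have he1 : (2.7182818 : ℝ) < Real.exp 1 := by
      have := Real.exp_one_gt_d9; linarith
    have hp : (0:ℝ) < Real.exp 1 := Real.exp_pos 1
    have hq3 : (20.08 : ℝ) < Real.exp 3 := by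
      have h3 : Real.exp 3 = Real.exp 1 ^ 3 := by
        rw [← Real.exp_nat_mul]; norm_num
      have h4 : (2.7182818:ℝ)^3 ≤ Real.exp 1 ^ 3 := pow_le_pow_left₀ (by norm_num) he1.le 3
      rw [h3]; nlinarith
    have h2 : Real.exp (-(3:ℝ)) = (Real.exp 3)⁻¹ := Real.exp_neg _
    have h4 : (Real.exp 3)⁻¹ < 1/8 := by
      rw [inv_lt_iff_one_lt_mul₀ (Real.exp_pos _)]
      nlinarith
    rw [h2] at h1
    linarith
  have hu_sum : Summable u := by
    have : u = fun n => (2 * Real.pi) *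
        ((ArithmeticFunction.sigma 1 (n + 1) : ℝ) * ((n : ℝ) + 1) *
          Real.exp (-(2 * Real.pi * 0.9)) ^ (n + 1)) := by
      funext n
      rw [hu_def]
      simp only
      rw [hexp_pow 0.9 n]
      ring
    rw [this]
    exact (aux_summable _ (Real.exp_nonneg _) (h8small 0.9 le_rfl)).mul_left _
  -- the half-plane
  have hopen : IsOpen {w : ℂ | (0.9:ℝ) < w.im} := isOpen_lt continuous_const Complex.continuous_im
  have hconn : IsPreconnected {w : ℂ | (0.9:ℝ) < w.im} :=
    (convex_halfSpace_im_gt (0.9:ℝ)).isPreconnected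
  have hzt : z ∈ {w : ℂ | (0.9:ℝ) < w.im} := by
    simp only [Set.mem_setOf_eq]; linarith
  have hbound : ∀ (n : ℕ) (y : ℂ), y ∈ {w : ℂ | (0.9:ℝ) < w.im} → ‖g' n y‖ ≤ u n := by
    intro n y hy
    rw [hnorm n y, hu_def]
    simp only
    apply mul_le_mul_of_nonneg_left _ (by positivity)
    apply Real.exp_le_exp.mpr
    have hy' : (0.9:ℝ) < y.im := hy
    have hmul := mul_le_mul_of_nonneg_left hy'.le
      (by positivity : (0:ℝ) ≤ 2 * Real.pi * ((n:ℝ)+1))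
    nlinarith
  -- summability of g at z
  have hgz_sum : Summable (fun n => g n z) := by
    apply Summable.of_norm
    have heq : ∀ n : ℕ, ‖g n z‖ = (ArithmeticFunction.sigma 1 (n + 1) : ℝ) *
        Real.exp (-(2 * Real.pi * ((n : ℝ) + 1)) * z.im) := by
      intro n
      simp only [hg_def, norm_mul, Complex.norm_natCast, Complex.norm_exp]
      congr 1
      have ha : 2 * (Real.pi : ℂ) * Complex.I * ((n : ℂ) + 1)
          = ((2 * Real.pi * ((n : ℝ) + 1) : ℝ) : ℂ) * Complex.I := by push_cast; ring
      rw [ha]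
      congr 1
      simp [Complex.mul_re]
    simp only [heq]
    refine Summable.of_nonneg_of_le (f := fun n => (ArithmeticFunction.sigma 1 (n + 1) : ℝ) * ((n : ℝ) + 1) *
        Real.exp (-(2 * Real.pi * z.im)) ^ (n + 1)) (fun n => by positivity) (fun n => ?_)
      (aux_summable _ (Real.exp_nonneg _) (h8small z.im (by linarith)))
    simp only [hexp_pow z.im]
    show (ArithmeticFunction.sigma 1 (n + 1) : ℝ) * Real.exp (-(2 * Real.pi * z.im)) ^ (n + 1)
      ≤ (ArithmeticFunction.sigma 1 (n + 1) : ℝ) * ((n : ℝ) + 1) *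
          Real.exp (-(2 * Real.pi * z.im)) ^ (n + 1)
    have h1 : (0:ℝ) ≤ (n:ℝ) := Nat.cast_nonneg n
    have h2 : (0:ℝ) ≤ Real.exp (-(2 * Real.pi * z.im)) ^ (n + 1) := by positivity
    nlinarith [mul_nonneg (mul_nonneg
      (Nat.cast_nonneg (α := ℝ) (ArithmeticFunction.sigma 1 (n + 1))) h1) h2]
  -- apply term-by-term differentiation
  have hD : HasDerivAt (fun w => ∑' n, g n w) (∑' n, g' n z) z :=
    hasDerivAt_tsum_of_isPreconnected hu_sum hopen hconn
      (fun n y _ => hder n y) hbound hzt hgz_sum hzt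
  have hE : HasDerivAt E₂ (-(24 * ∑' n, g' n z)) z := by
    have h24 := (hD.const_mul (24:ℂ)).const_sub 1
    exact h24
  have hderiv : deriv E₂ z = -(24 * ∑' n, g' n z) := hE.deriv
  -- summability of norms at z
  set r : ℝ := Real.exp (-(2 * Real.pi * z.im)) with hr_def
  have hr_nonneg : (0:ℝ) ≤ r := Real.exp_nonneg _
  have hr8 : 8 * r < 1 := h8small z.im (by linarith)
  have hterm_eq : ∀ n : ℕ, (ArithmeticFunction.sigma 1 (n + 1) : ℝ) * ((n : ℝ) + 1) *
      Real.exp (-2 * Real.pi * ((n : ℝ) + 1) * z.im)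
      = (ArithmeticFunction.sigma 1 (n + 1) : ℝ) * ((n : ℝ) + 1) * r ^ (n + 1) := by
    intro n
    rw [hr_def, ← hexp_pow z.im n]
    ring_nf
  have hstated_sum : Summable (fun n : ℕ => (ArithmeticFunction.sigma 1 (n + 1) : ℝ) * ((n : ℝ) + 1) *
      Real.exp (-2 * Real.pi * ((n : ℝ) + 1) * z.im)) := by
    simp only [hterm_eq]
    exact aux_summable r hr_nonneg hr8
  have hnorm_sum : Summable (fun n : ℕ => ‖g' n z‖) := by
    have : (fun n : ℕ => ‖g' n z‖) = fun n => (2 * Real.pi) *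
        ((ArithmeticFunction.sigma 1 (n + 1) : ℝ) * ((n : ℝ) + 1) *
          Real.exp (-2 * Real.pi * ((n : ℝ) + 1) * z.im)) := by
      funext n
      rw [show ‖g' n z‖ = ‖g' n z‖ from rfl, hnorm n z]
      ring_nf
    rw [this]
    exact hstated_sum.mul_left _
  -- the first inequality
  have habs : ‖deriv E₂ z‖
      ≤ 48 * Real.pi * ∑' n : ℕ, (ArithmeticFunction.sigma 1 (n + 1) : ℝ) * ((n : ℝ) + 1) *
          Real.exp (-2 * Real.pi * ((n : ℝ) + 1) * z.im) := by
    rw [hderiv]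
    have h1 : ‖-(24 * ∑' n, g' n z)‖ = 24 * ‖∑' n, g' n z‖ := by
      rw [norm_neg, norm_mul]
      norm_num
    rw [h1]
    have h2 : ‖∑' n, g' n z‖ ≤ ∑' n, ‖g' n z‖ := by
      exact norm_tsum_le_tsum_norm hnorm_sum
    have h3 : (∑' n : ℕ, ‖g' n z‖) = 2 * Real.pi *
        ∑' n : ℕ, (ArithmeticFunction.sigma 1 (n + 1) : ℝ) * ((n : ℝ) + 1) *
          Real.exp (-2 * Real.pi * ((n : ℝ) + 1) * z.im) := by
      rw [← tsum_mul_left]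
      congr 1
      funext n
      rw [show ‖g' n z‖ = ‖g' n z‖ from rfl, hnorm n z]
      ring_nf
    calc 24 * ‖∑' n, g' n z‖ ≤ 24 * ∑' n, ‖g' n z‖ := by linarith
      _ = 48 * Real.pi * ∑' n : ℕ, (ArithmeticFunction.sigma 1 (n + 1) : ℝ) * ((n : ℝ) + 1) *
          Real.exp (-2 * Real.pi * ((n : ℝ) + 1) * z.im) := by rw [h3]; ring
  refine ⟨habs, ?_⟩
  -- the numeric bound
  have hT_le : (∑' n : ℕ, (ArithmeticFunction.sigma 1 (n + 1) : ℝ) * ((n : ℝ) + 1) *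
      Real.exp (-2 * Real.pi * ((n : ℝ) + 1) * z.im)) ≤ r / (1 - 8 * r) := by
    calc (∑' n : ℕ, (ArithmeticFunction.sigma 1 (n + 1) : ℝ) * ((n : ℝ) + 1) *
        Real.exp (-2 * Real.pi * ((n : ℝ) + 1) * z.im))
        = ∑' n : ℕ, (ArithmeticFunction.sigma 1 (n + 1) : ℝ) * ((n : ℝ) + 1) * r ^ (n + 1) := by
          congr 1; funext n; exact hterm_eq n
      _ ≤ r / (1 - 8 * r) := aux_tsum_le r hr_nonneg hr8
  have hr_small : r < 0.0025642 := by
    have h1 : r ≤ Real.exp (-(1.9 * Real.pi)) := by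
      rw [hr_def]
      apply Real.exp_le_exp.mpr
      nlinarith
    linarith [aux_exp_small]
  have hT_nonneg : (0:ℝ) ≤ ∑' n : ℕ, (ArithmeticFunction.sigma 1 (n + 1) : ℝ) * ((n : ℝ) + 1) *
      Real.exp (-2 * Real.pi * ((n : ℝ) + 1) * z.im) :=
    tsum_nonneg fun n => by positivity
  have hden : (0:ℝ) < 1 - 8 * r := by linarith
  have hT_small : (∑' n : ℕ, (ArithmeticFunction.sigma 1 (n + 1) : ℝ) * ((n : ℝ) + 1) *
      Real.exp (-2 * Real.pi * ((n : ℝ) + 1) * z.im)) < 0.00262 := by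
    have : r / (1 - 8 * r) < 0.00262 := by
      rw [div_lt_iff₀ hden]
      nlinarith
    linarith
  have hpi' : Real.pi < 3.141593 := Real.pi_lt_d6
  have hfin : 48 * Real.pi * (∑' n : ℕ, (ArithmeticFunction.sigma 1 (n + 1) : ℝ) * ((n : ℝ) + 1) *
      Real.exp (-2 * Real.pi * ((n : ℝ) + 1) * z.im)) < 48 * Real.pi * 0.00262 :=
    mul_lt_mul_of_pos_left hT_small (by positivity)
  nlinarith
end
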